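/- Oblique cusp position (Proposition 10.1(ii)): let n₁, n₂, d, b, c′ be positive reals with b + d + c′ = 1. Set a₁ = −n₁−b, b₁ = −n₁, a₂ = 0, b₂ = d, a₃ = n₂+d, b₃ = n₂+d+c′, and for real w away from the points a_i, b_i and from the zeros of S define P(w) = ∏_{i=1}^3 (w−b_i)/(w−a_i), S(w) = Σ_{i=1}^3 ( 1/(w−b_i) − 1/(w−a_i) ), x(w) = w + (P(w)−1)/S(w), and y(w) = 1 − (P(w)−1)²/(P(w)·S(w)). Then x(w) and y(w) converge to limits x(a₂) and y(a₂) as w → 0 (through values w ≠ 0), and these limits satisfy 1 − d − y(a₂) = x(a₂) − d = d·(n₁·c′ − (n₂+d)·b) / ( (n₁+b)·(n₂+d) ). In particular, the cuspidal point lies on the extension of the left-hand (slope −1) segment of the cut strictly below its tip if and only if n₂·b − n₁·c′ < −d·b. -/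
import Mathlib


/-- Oblique cusp position (Proposition 10.1(ii)): for Petrov's parametrization of the
arctic curve of the one-cut hexagon (cuts `[a_i,b_i]` with `a₁ = -n₁-b`, `b₁ = -n₁`,
`a₂ = 0`, `b₂ = d`, `a₃ = n₂+d`, `b₃ = n₂+d+c'`), the values
`x(a₂) = lim_{w→0} x(w)` and `y(a₂) = lim_{w→0} y(w)` exist and satisfy
`1 - d - y(a₂) = x(a₂) - d = d(n₁c' - (n₂+d)b)/((n₁+b)(n₂+d))`; in particular the
cuspidal point lies on the extension of the left-hand (slope `-1`) segment of the cut
strictly below its tip (i.e. `x(a₂) > d` and `y(a₂) < 1 - d`) iff `n₂b - n₁c' < -db`. -/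
theorem oblique_cusp_position (n₁ n₂ d b c' : ℝ)
    (hn₁ : 0 < n₁) (hn₂ : 0 < n₂) (hd : 0 < d) (hb : 0 < b) (hc' : 0 < c')
    (hsum : b + d + c' = 1)
    (P S x y : ℝ → ℝ)
    (hP : ∀ w, P w = ((w + n₁) / (w + n₁ + b)) * ((w - d) / w) *
        ((w - (n₂ + d + c')) / (w - (n₂ + d))))
    (hS : ∀ w, S w = (1 / (w + n₁) - 1 / (w + n₁ + b)) + (1 / (w - d) - 1 / w) +
        (1 / (w - (n₂ + d + c')) - 1 / (w - (n₂ + d))))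
    (hx : ∀ w, x w = w + (P w - 1) / S w)
    (hy : ∀ w, y w = 1 - (P w - 1) ^ 2 / (P w * S w)) :
    ∃ Lx Ly : ℝ,
      Filter.Tendsto x (nhdsWithin 0 ({0} : Set ℝ)ᶜ) (nhds Lx) ∧
      Filter.Tendsto y (nhdsWithin 0 ({0} : Set ℝ)ᶜ) (nhds Ly) ∧
      1 - d - Ly = Lx - d ∧
      Lx - d = d * (n₁ * c' - (n₂ + d) * b) / ((n₁ + b) * (n₂ + d)) ∧
      ((d < Lx ∧ Ly < 1 - d) ↔ n₂ * b - n₁ * c' < -(d * b)) := by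
  have h1 : n₁ + b ≠ 0 := by positivity
  have h2 : n₂ + d ≠ 0 := by positivity
  have h3 : n₂ + d + c' ≠ 0 := by positivity
  set Lx : ℝ := d * n₁ * (n₂ + d + c') / ((n₁ + b) * (n₂ + d)) with hLx
  set Ly : ℝ := 1 - Lx with hLy
  -- auxiliary functions, regular at 0
  set A : ℝ → ℝ := fun w => ((w + n₁) / (w + n₁ + b)) * ((w - (n₂ + d + c')) / (w - (n₂ + d))) with hA
  set B : ℝ → ℝ := fun w => 1 / (w + n₁) - 1 / (w + n₁ + b) + 1 / (w - d) +
      1 / (w - (n₂ + d + c')) - 1 / (w - (n₂ + d)) with hB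
  set N : ℝ → ℝ := fun w => A w * (w - d) - w with hN
  set D : ℝ → ℝ := fun w => w * B w - 1 with hD
  set Fx : ℝ → ℝ := fun w => w + N w / D w with hFx
  set Gy : ℝ → ℝ := fun w => 1 - (N w) ^ 2 / (A w * (w - d) * D w) with hGy
  -- continuity at 0
  have cA : ContinuousAt A 0 := by
    apply ContinuousAt.mul
    · exact ContinuousAt.div (by fun_prop) (by fun_prop) (by simpa using h1)
    · exact ContinuousAt.div (by fun_prop) (by fun_prop)
        (by simp only [zero_sub, neg_ne_zero]; exact h2)
  have cB : ContinuousAt B 0 := by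
    apply ContinuousAt.sub
    apply ContinuousAt.add
    apply ContinuousAt.add
    apply ContinuousAt.sub
    · exact ContinuousAt.div (by fun_prop) (by fun_prop) (by simpa using hn₁.ne')
    · exact ContinuousAt.div (by fun_prop) (by fun_prop) (by simpa using h1)
    · exact ContinuousAt.div (by fun_prop) (by fun_prop)
        (by simp only [zero_sub, neg_ne_zero]; exact hd.ne')
    · exact ContinuousAt.div (by fun_prop) (by fun_prop)
        (by simp only [zero_sub, neg_ne_zero]; exact h3)
    · exact ContinuousAt.div (by fun_prop) (by fun_prop)
        (by simp only [zero_sub, neg_ne_zero]; exact h2)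
  have cN : ContinuousAt N 0 := (cA.mul (by fun_prop)).sub (by fun_prop)
  have cD : ContinuousAt D 0 := (continuousAt_id.mul cB).sub (by fun_prop)
  have hA0 : A 0 = n₁ * (n₂ + d + c') / ((n₁ + b) * (n₂ + d)) := by
    simp only [hA, zero_add, zero_sub, div_mul_div_comm, mul_neg, neg_div_neg_eq]
  have hA0pos : 0 < A 0 := by rw [hA0]; positivity
  have hD0 : D 0 = -1 := by simp [hD]
  have hN0 : N 0 = -(d * A 0) := by simp only [hN]; ring
  have hDne0 : D 0 ≠ 0 := by rw [hD0]; norm_num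
  have hdA : A 0 * (0 - d) * D 0 = d * A 0 := by rw [hD0]; ring
  have hdA0 : d * A 0 ≠ 0 := by positivity
  have hADne0 : A 0 * (0 - d) * D 0 ≠ 0 := by rw [hdA]; exact hdA0
  have cFx : ContinuousAt Fx 0 := continuousAt_id.add (cN.div cD hDne0)
  have cGy : ContinuousAt Gy 0 :=
    continuousAt_const.sub ((cN.pow 2).div ((cA.mul (by fun_prop)).mul cD) hADne0)
  have hLxA : Lx = d * A 0 := by rw [hLx, hA0]; ring
  have hFx0 : Fx 0 = Lx := by
    simp only [hFx]
    rw [hN0, hD0, hLxA, zero_add, neg_div_neg_eq, div_one]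
  have hGy0 : Gy 0 = Ly := by
    simp only [hGy]
    rw [hN0, hdA, neg_sq, sq, mul_div_assoc, div_self hdA0, mul_one, hLy, hLxA]
  -- pointwise identities for w ≠ 0
  have evAll : ∀ᶠ w in nhdsWithin (0:ℝ) ({0} : Set ℝ)ᶜ, x w = Fx w ∧ y w = Gy w := by
    have hw0 : ∀ᶠ w in nhdsWithin (0:ℝ) ({0} : Set ℝ)ᶜ, w ≠ 0 := by
      filter_upwards [self_mem_nhdsWithin (a := (0:ℝ)) (s := ({0} : Set ℝ)ᶜ)] with w hw
      simpa using hw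
    filter_upwards [hw0] with w hw
    have hww : w * w ≠ 0 := mul_ne_zero hw hw
    have hSw : S w = D w / w := by
      have : D w / w = B w - 1 / w := by
        simp only [hD]
        rw [sub_div, mul_div_cancel_left₀ _ hw, one_div]
      rw [this, hS]
      simp only [hB]
      ring
    have hPw : P w = A w * ((w - d) / w) := by rw [hP]; simp only [hA]; ring
    have hPw1 : P w - 1 = N w / w := by
      rw [hPw]; simp only [hN]; field_simp
    have hPSw : P w * S w = (A w * (w - d)) * D w / (w * w) := by
      rw [hPw, hSw]; field_simp
    constructor
    · simp only [hFx]
      rw [hx, hPw1, hSw, div_div_div_comm, div_self hw, div_one]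
    · simp only [hGy]
      rw [hy, hPw1, hPSw, div_pow, pow_two w, div_div_div_comm, div_self hww, div_one]
  have tFx' : Filter.Tendsto Fx (nhdsWithin 0 ({0} : Set ℝ)ᶜ) (nhds Lx) := by
    rw [← hFx0]; exact cFx.tendsto.mono_left nhdsWithin_le_nhds
  have tGy' : Filter.Tendsto Gy (nhdsWithin 0 ({0} : Set ℝ)ᶜ) (nhds Ly) := by
    rw [← hGy0]; exact cGy.tendsto.mono_left nhdsWithin_le_nhds
  have tFx : Filter.Tendsto x (nhdsWithin 0 ({0} : Set ℝ)ᶜ) (nhds Lx) :=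
    tFx'.congr' (evAll.mono fun w h => h.1.symm) |>.congr (fun _ => rfl)
  have tGy : Filter.Tendsto y (nhdsWithin 0 ({0} : Set ℝ)ᶜ) (nhds Ly) :=
    tGy'.congr' (evAll.mono fun w h => h.2.symm) |>.congr (fun _ => rfl)
  refine ⟨Lx, Ly, tFx, tGy, by rw [hLy]; ring, ?_, ?_⟩
  · rw [hLx]; field_simp; ring
  · have hLxd : Lx - d = d * (n₁ * c' - (n₂ + d) * b) / ((n₁ + b) * (n₂ + d)) := by
      rw [hLx]; field_simp; ring
    constructor
    · rintro ⟨h, -⟩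
      have h0 : 0 < Lx - d := by linarith
      rw [hLxd] at h0
      rcases div_pos_iff.mp h0 with ⟨h5, -⟩ | ⟨-, h6⟩
      · nlinarith
      · nlinarith
    · intro h
      have he : 0 < n₁ * c' - (n₂ + d) * b := by nlinarith
      have h0 : 0 < Lx - d := by rw [hLxd]; positivity
      exact ⟨by linarith, by rw [hLy]; linarith⟩
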